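/- Define x = (x_n)_{n≥0} ∈ {0,1,2}^ℕ by x_n = r (for r ∈ {0,1,2}) whenever 3^{3k+r} ≤ n+1 < 3^{3k+r+1} for some k ≥ 0. Then for every ν ∈ V(x) there exists q ∈ {0,1,2} such that ν({y : y_0 = q}) ≤ 3/13 < 1/3. In particular no ν ∈ V(x) gives each of the three cylinders {y : y_0 = 0}, {y : y_0 = 1}, {y : y_0 = 2} measure 1/3. -/

import Mathlib

open MeasureTheory Filter Topology
open scoped ENNReal NNReal Classical

section EmpiricalMeasures

variable {X : Type*} [MeasurableSpace X]

/-- The empirical (Cesàro) measure `E(x, N+1) = (1/(N+1)) ∑_{n=1}^{N+1} δ_{T^{n-1} x}`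
(indexed so that `cesaroEmp T x N` has `N + 1` point masses). -/
noncomputable def cesaroEmp (T : X → X) (x : X) (N : ℕ) : ProbabilityMeasure X :=
  ⟨((N + 1 : ℝ≥0∞))⁻¹ • ∑ n ∈ Finset.range (N + 1), Measure.dirac (T^[n] x), by
    constructor
    simp [Measure.smul_apply, Measure.finset_sum_apply, Finset.sum_const,
      ENNReal.inv_mul_cancel, Nat.cast_add_one_ne_zero]⟩

/-- The harmonic sum `H_{N+1} = ∑_{n=1}^{N+1} 1/n`, as an element of `ℝ≥0∞`. -/
noncomputable def harmonicSum (N : ℕ) : ℝ≥0∞ :=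
  ∑ n ∈ Finset.range (N + 1), ((n : ℝ≥0∞) + 1)⁻¹

/-- The logarithmic (harmonic) empirical measure
`E^log(x, N+1) = (1/H_{N+1}) ∑_{n=1}^{N+1} (1/n) δ_{T^{n-1} x}`
(indexed so that `logEmp T x N` has `N + 1` point masses). -/
noncomputable def logEmp (T : X → X) (x : X) (N : ℕ) : ProbabilityMeasure X :=
  ⟨(harmonicSum N)⁻¹ • ∑ n ∈ Finset.range (N + 1),
      (((n : ℝ≥0∞) + 1)⁻¹ • Measure.dirac (T^[n] x)), by
    constructor
    have h1 : (harmonicSum N) ≠ 0 := by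
      intro h
      have hle : (((0 : ℕ) : ℝ≥0∞) + 1)⁻¹ ≤ harmonicSum N :=
        Finset.single_le_sum (f := fun n : ℕ => ((n : ℝ≥0∞) + 1)⁻¹)
          (fun i _ => zero_le) (Finset.mem_range.2 (Nat.succ_pos N))
      rw [h] at hle
      simp at hle
    have h2 : (harmonicSum N) ≠ ⊤ := by
      refine (ENNReal.sum_lt_top.2 fun n _ => ?_).ne
      simp [ENNReal.inv_lt_top]
    have key : ((harmonicSum N)⁻¹ • ∑ n ∈ Finset.range (N + 1),
        (((n : ℝ≥0∞) + 1)⁻¹ • Measure.dirac (T^[n] x))) Set.univ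
        = (harmonicSum N)⁻¹ * harmonicSum N := by
      simp [Measure.smul_apply, Measure.finset_sum_apply, harmonicSum]
    rw [key, ENNReal.inv_mul_cancel h1 h2]⟩

variable [TopologicalSpace X] [OpensMeasurableSpace X]

/-- The set of limit points (along strictly increasing subsequences) of a sequence. -/
def seqLimitPoints {α : Type*} [TopologicalSpace α] (u : ℕ → α) : Set α :=
  {p | ∃ φ : ℕ → ℕ, StrictMono φ ∧ Tendsto (u ∘ φ) atTop (𝓝 p)}

/-- `V(x)`: the set of weak-* limit points of the empirical measures `(E(x,N))_{N ≥ 1}`. -/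
noncomputable def cesaroLimitSet (T : X → X) (x : X) : Set (ProbabilityMeasure X) :=
  seqLimitPoints (fun N => cesaroEmp T x N)

/-- `V^log(x)`: the set of weak-* limit points of the logarithmic empirical measures
`(E^log(x,N))_{N ≥ 2}` (the set of limit points is unaffected by also allowing `N = 1`). -/
noncomputable def logLimitSet (T : X → X) (x : X) : Set (ProbabilityMeasure X) :=
  seqLimitPoints (fun N => logEmp T x N)

end EmpiricalMeasures

/-- The left shift on `{0,1,2}^ℕ`. -/
def shift3 : (ℕ → Fin 3) → (ℕ → Fin 3) := fun y n => y (n + 1)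

/-- The point `x = 00 111111 2^18 0^54 … ∈ {0,1,2}^ℕ`: `x_n = r` whenever
`3^(3k+r) ≤ n+1 < 3^(3k+r+1)` for some `k ≥ 0` (`r ∈ {0,1,2}`). -/
noncomputable def xTri : ℕ → Fin 3 := fun n =>
  if ∃ k : ℕ, 3 ^ (3 * k) ≤ n + 1 ∧ n + 1 < 3 ^ (3 * k + 1) then 0
  else if ∃ k : ℕ, 3 ^ (3 * k + 1) ≤ n + 1 ∧ n + 1 < 3 ^ (3 * k + 2) then 1
  else 2


lemma shift3_iter_apply (n : ℕ) (y : ℕ → Fin 3) : (shift3^[n] y) 0 = y n := by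
  induction n generalizing y with
  | zero => rfl
  | succ k ih =>
    rw [Function.iterate_succ_apply]
    exact (ih (shift3 y)).trans rfl

lemma xTri_val (n : ℕ) : (xTri n).val = Nat.log 3 (n + 1) % 3 := by
  have hself : 3 ^ Nat.log 3 (n + 1) ≤ n + 1 := Nat.pow_log_le_self 3 n.succ_ne_zero
  have hlt : n + 1 < 3 ^ (Nat.log 3 (n + 1) + 1) :=
    Nat.lt_pow_succ_log_self (by norm_num) _
  set j := Nat.log 3 (n + 1) with hj
  have c0 : (∃ k, 3 ^ (3 * k) ≤ n + 1 ∧ n + 1 < 3 ^ (3 * k + 1)) ↔ j % 3 = 0 := by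
    constructor
    · rintro ⟨k, h1, h2⟩
      have := Nat.log_eq_of_pow_le_of_lt_pow h1 h2
      omega
    · intro h
      refine ⟨j / 3, ?_⟩
      have h3 : 3 * (j / 3) = j := by omega
      rw [h3]
      exact ⟨hself, hlt⟩
  have c1 : (∃ k, 3 ^ (3 * k + 1) ≤ n + 1 ∧ n + 1 < 3 ^ (3 * k + 2)) ↔ j % 3 = 1 := by
    constructor
    · rintro ⟨k, h1, h2⟩
      have := Nat.log_eq_of_pow_le_of_lt_pow h1 (by
        have : 3 * k + 2 = (3 * k + 1) + 1 := by omega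
        rw [this] at h2
        exact h2)
      omega
    · intro h
      refine ⟨j / 3, ?_⟩
      have e1 : 3 * (j / 3) + 1 = j := by omega
      have e2 : 3 * (j / 3) + 2 = j + 1 := by omega
      rw [e1, e2]
      exact ⟨hself, hlt⟩
  unfold xTri
  split_ifs with h1 h2
  · have := c0.mp h1
    show (0 : ℕ) = j % 3
    omega
  · have := c1.mp h2
    show (1 : ℕ) = j % 3
    omega
  · have e0 : ¬ j % 3 = 0 := fun h => h1 (c0.mpr h)
    have e1 : ¬ j % 3 = 1 := fun h => h2 (c1.mpr h)
    show (2 : ℕ) = j % 3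
    omega

lemma count_res (j : ℕ) :
    13 * ((Finset.range (3 ^ j - 1)).filter
      (fun n => Nat.log 3 (n + 1) % 3 = (j + 2) % 3)).card ≤ 3 ^ (j + 2) := by
  induction j using Nat.strong_induction_on with
  | _ j ih =>
    rcases lt_or_ge j 3 with h3 | h3
    · interval_cases j
      · simp
      · have hfil : (Finset.range (3 ^ 1 - 1)).filter
            (fun n => Nat.log 3 (n + 1) % 3 = (1 + 2) % 3) = Finset.range 2 := by
          apply Finset.filter_true_of_mem
          intro n hn
          have hn2 : n < 2 := by simpa using hn
          have hlog : Nat.log 3 (n + 1) = 0 :=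
            Nat.log_eq_of_pow_le_of_lt_pow (by omega) (by simpa using by omega)
          simp [hlog]
        rw [hfil]
        norm_num
      · have hfil : (Finset.range (3 ^ 2 - 1)).filter
            (fun n => Nat.log 3 (n + 1) % 3 = (2 + 2) % 3) = Finset.Ico 2 8 := by
          ext n
          simp only [Finset.mem_filter, Finset.mem_range, Finset.mem_Ico]
          constructor
          · rintro ⟨hn, hp⟩
            have hn8 : n < 8 := by norm_num at hn; omega
            have hlog : Nat.log 3 (n + 1) < 2 :=
              (Nat.log_lt_iff_lt_pow (by norm_num) (by omega)).mpr (by norm_num; omega)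
            have hp1 : Nat.log 3 (n + 1) = 1 := by omega
            have hge := Nat.pow_log_le_self 3 (x := n + 1) (by omega)
            rw [hp1] at hge
            norm_num at hge
            omega
          · rintro ⟨h2, h8⟩
            have hlog : Nat.log 3 (n + 1) = 1 :=
              Nat.log_eq_of_pow_le_of_lt_pow (by norm_num; omega) (by norm_num; omega)
            refine ⟨by norm_num; omega, by rw [hlog]⟩
        rw [hfil]
        norm_num
    · obtain ⟨m, rfl⟩ : ∃ m, j = m + 3 := ⟨j - 3, by omega⟩
      have h1m : (1 : ℕ) ≤ 3 ^ m := Nat.one_le_pow _ _ (by norm_num)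
      have hmono : (3 : ℕ) ^ m ≤ 3 ^ (m + 2) := Nat.pow_le_pow_right (by norm_num) (by omega)
      have hpow3 : (3 : ℕ) ^ (m + 3) = 3 * 3 ^ (m + 2) := by ring
      have hres : (m + 3 + 2) % 3 = (m + 2) % 3 := by omega
      rw [hres]
      have hsplit : Finset.range (3 ^ (m + 3) - 1)
          = Finset.range (3 ^ m - 1) ∪ Finset.Ico (3 ^ m - 1) (3 ^ (m + 3) - 1) := by
        rw [Finset.range_eq_Ico, Finset.range_eq_Ico, Finset.Ico_union_Ico_eq_Ico (Nat.zero_le _) (by omega)]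
      have hIco : (Finset.Ico (3 ^ m - 1) (3 ^ (m + 3) - 1)).filter
          (fun n => Nat.log 3 (n + 1) % 3 = (m + 2) % 3)
          = Finset.Ico (3 ^ (m + 2) - 1) (3 ^ (m + 3) - 1) := by
        ext n
        simp only [Finset.mem_filter, Finset.mem_Ico]
        constructor
        · rintro ⟨⟨hlo, hhi⟩, hp⟩
          have hge : m ≤ Nat.log 3 (n + 1) :=
            (Nat.le_log_iff_pow_le (by norm_num) (by omega)).mpr (by omega)
          have hle : Nat.log 3 (n + 1) < m + 3 :=
            (Nat.log_lt_iff_lt_pow (by norm_num) (by omega)).mpr (by omega)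
          have hlogeq : Nat.log 3 (n + 1) = m + 2 := by omega
          have hsf := Nat.pow_log_le_self 3 (x := n + 1) (by omega)
          rw [hlogeq] at hsf
          omega
        · rintro ⟨hlo, hhi⟩
          have hlogeq : Nat.log 3 (n + 1) = m + 2 :=
            Nat.log_eq_of_pow_le_of_lt_pow (by omega) (by omega)
          exact ⟨⟨by omega, by omega⟩, by omega⟩
      have hdisj : Disjoint ((Finset.range (3 ^ m - 1)).filter
            (fun n => Nat.log 3 (n + 1) % 3 = (m + 2) % 3))
          ((Finset.Ico (3 ^ m - 1) (3 ^ (m + 3) - 1)).filter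
            (fun n => Nat.log 3 (n + 1) % 3 = (m + 2) % 3)) := by
        refine Finset.disjoint_filter_filter ?_
        rw [Finset.range_eq_Ico]
        exact Finset.Ico_disjoint_Ico_consecutive 0 _ _
      rw [hsplit, Finset.filter_union, Finset.card_union_of_disjoint hdisj, hIco]
      have hcard : (Finset.Ico (3 ^ (m + 2) - 1) (3 ^ (m + 3) - 1)).card
          = 3 ^ (m + 3) - 3 ^ (m + 2) := by
        rw [Nat.card_Ico]
        omega
      have ihm := ih m (by omega)
      have hpow5 : (3 : ℕ) ^ (m + 3 + 2) = 27 * 3 ^ (m + 2) := by ring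
      have hpow4 : (3 : ℕ) ^ (m + 2 + 2) = 9 * 3 ^ (m + 2) := by ring
      rw [hcard]
      omega

lemma exists_small_freq (M : ℕ) (hM : 1 ≤ M) :
    ∃ q : Fin 3, 13 * ((Finset.range M).filter (fun n => xTri n = q)).card ≤ 3 * M := by
  set j := Nat.log 3 M with hj
  refine ⟨⟨(j + 1) % 3, Nat.mod_lt _ (by norm_num)⟩, ?_⟩
  have hpred : ∀ n, (xTri n = (⟨(j + 1) % 3, Nat.mod_lt _ (by norm_num)⟩ : Fin 3))
      ↔ Nat.log 3 (n + 1) % 3 = (j + 1) % 3 := by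
    intro n
    rw [Fin.ext_iff, xTri_val]
  rcases lt_or_ge j 2 with h2 | h2
  · have hempty : (Finset.range M).filter (fun n => xTri n
        = (⟨(j + 1) % 3, Nat.mod_lt _ (by norm_num)⟩ : Fin 3)) = ∅ := by
      apply Finset.filter_false_of_mem
      intro n hn
      rw [hpred]
      have hnM : n + 1 ≤ M := by
        have := Finset.mem_range.mp hn
        omega
      have hlog : Nat.log 3 (n + 1) ≤ j := Nat.log_mono_right hnM
      omega
    rw [hempty]
    simp
  · have hMlt : M < 3 ^ (j + 1) := Nat.lt_pow_succ_log_self (by norm_num) M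
    have hMge : 3 ^ j ≤ M := Nat.pow_log_le_self 3 (by omega)
    have h1m : (1 : ℕ) ≤ 3 ^ (j - 1) := Nat.one_le_pow _ _ (by norm_num)
    have hsub : (Finset.range M).filter (fun n => xTri n
          = (⟨(j + 1) % 3, Nat.mod_lt _ (by norm_num)⟩ : Fin 3))
        ⊆ (Finset.range (3 ^ (j - 1) - 1)).filter
          (fun n => Nat.log 3 (n + 1) % 3 = (j - 1 + 2) % 3) := by
      intro n hn
      rw [Finset.mem_filter] at hn ⊢
      obtain ⟨hnM, hp⟩ := hn
      rw [hpred] at hp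
      have hnM' : n < M := Finset.mem_range.mp hnM
      have hlogle : Nat.log 3 (n + 1) ≤ j := Nat.log_mono_right (by omega)
      have hlog2 : Nat.log 3 (n + 1) ≤ j - 2 := by omega
      have hlt : n + 1 < 3 ^ (Nat.log 3 (n + 1) + 1) :=
        Nat.lt_pow_succ_log_self (by norm_num) _
      have hple : 3 ^ (Nat.log 3 (n + 1) + 1) ≤ 3 ^ (j - 1) :=
        Nat.pow_le_pow_right (by norm_num) (by omega)
      refine ⟨Finset.mem_range.mpr (by omega), by omega⟩
    have hcard := Finset.card_le_card hsub
    have hcr := count_res (j - 1)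
    have hje : j - 1 + 2 = j + 1 := by omega
    have hexp : (3 : ℕ) ^ (j - 1 + 2) = 3 * 3 ^ j := by rw [hje]; ring
    omega

lemma mble_cyl (q : Fin 3) : MeasurableSet {y : ℕ → Fin 3 | y 0 = q} := by
  have e : {y : ℕ → Fin 3 | y 0 = q} = (fun y : ℕ → Fin 3 => y 0) ⁻¹' {q} := rfl
  rw [e]
  exact measurable_pi_apply 0 (measurableSet_singleton q)

lemma cesaroEmp_cyl (N : ℕ) (q : Fin 3) :
    (cesaroEmp shift3 xTri N : Measure (ℕ → Fin 3)) {y | y 0 = q}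
      = ((((Finset.range (N + 1)).filter (fun n => xTri n = q)).card : ℝ≥0∞)) / (N + 1) := by
  have hs := mble_cyl q
  show (((N + 1 : ℝ≥0∞))⁻¹ • ∑ n ∈ Finset.range (N + 1),
      Measure.dirac (shift3^[n] xTri)) {y | y 0 = q} = _
  rw [Measure.smul_apply, Measure.finset_sum_apply]
  have hdir : ∀ n, Measure.dirac (shift3^[n] xTri) {y : ℕ → Fin 3 | y 0 = q}
      = if xTri n = q then (1 : ℝ≥0∞) else 0 := by
    intro n
    rw [Measure.dirac_apply' _ hs]
    by_cases h : xTri n = q <;>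
      simp [Set.indicator_apply, Set.mem_setOf_eq, shift3_iter_apply, h]
  rw [Finset.sum_congr rfl (fun n _ => hdir n), Finset.sum_boole]
  rw [smul_eq_mul, ENNReal.div_eq_inv_mul]

lemma div_le_313 {a b : ℕ} (hb : b ≠ 0) (h : 13 * a ≤ 3 * b) :
    (a : ℝ≥0∞) / b ≤ 3 / 13 := by
  rw [ENNReal.div_le_iff (by exact_mod_cast hb) (by simp)]
  rw [show (3 / 13 : ℝ≥0∞) * b = 3 * b / 13 by
    rw [div_eq_mul_inv, div_eq_mul_inv]; ring]
  rw [ENNReal.le_div_iff_mul_le (Or.inl (by norm_num)) (Or.inl (by norm_num))]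
  have : ((a : ℝ≥0∞)) * 13 = ((13 * a : ℕ) : ℝ≥0∞) := by push_cast; ring
  rw [this]
  have h2 : ((3 : ℝ≥0∞)) * b = ((3 * b : ℕ) : ℝ≥0∞) := by push_cast; ring
  rw [h2]
  exact_mod_cast h


/-- For the point `x = 00 111111 2^18 0^54 …` of the full shift on
`{0,1,2}`, every `ν ∈ V(x)` gives some one-letter cylinder `{y : y_0 = q}` measure at
most `3/13 < 1/3`; in particular no `ν ∈ V(x)` gives all three one-letter cylinders
measure `1/3`. -/
theorem cesaroLimitSet_of_xTri_small_cylinder (ν : ProbabilityMeasure (ℕ → Fin 3))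
    (hν : ν ∈ cesaroLimitSet shift3 xTri) :
    (∃ q : Fin 3, ν.toMeasure {y | y 0 = q} ≤ 3 / 13 ∧ (3 / 13 : ℝ≥0∞) < 1 / 3) ∧
      ¬ ∀ q : Fin 3, ν.toMeasure {y | y 0 = q} = 1 / 3 := by
  obtain ⟨φ, hφ, htend⟩ := hν
  have hch : ∀ N : ℕ, ∃ q : Fin 3,
      13 * ((Finset.range (φ N + 1)).filter (fun n => xTri n = q)).card ≤ 3 * (φ N + 1) :=
    fun N => exists_small_freq (φ N + 1) (by omega)
  choose Q hQ using hch
  obtain ⟨q, hq⟩ : ∃ q : Fin 3, ∃ᶠ N in atTop, Q N = q := by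
    by_contra hcon
    push_neg at hcon
    have h0 := hcon 0
    have h1 := hcon 1
    have h2 := hcon 2
    obtain ⟨N, hN0, hN1, hN2⟩ := (h0.and (h1.and h2)).exists
    rw [ne_eq, Fin.ext_iff] at hN0 hN1 hN2
    have := (Q N).isLt
    simp only [Fin.val_zero, Fin.val_one] at hN0 hN1 hN2
    have h2v : ((2 : Fin 3) : ℕ) = 2 := rfl
    rw [h2v] at hN2
    omega
  have hmble := mble_cyl q
  have hopen : IsOpen {y : ℕ → Fin 3 | y 0 = q} := by
    have e : {y : ℕ → Fin 3 | y 0 = q} = (fun y : ℕ → Fin 3 => y 0) ⁻¹' {q} := rfl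
    rw [e]
    exact IsOpen.preimage (continuous_apply 0) (isOpen_discrete {q})
  have hclosed : IsClosed ({y : ℕ → Fin 3 | y 0 = q})ᶜ := hopen.isClosed_compl
  have hlimsup := MeasureTheory.ProbabilityMeasure.limsup_measure_closed_le_of_tendsto
    htend hclosed
  have hliminf : ν.toMeasure {y | y 0 = q} ≤ atTop.liminf
      (fun N => (((fun N => cesaroEmp shift3 xTri N) ∘ φ) N :
        Measure (ℕ → Fin 3)) {y | y 0 = q}) :=
    MeasureTheory.le_measure_liminf_of_limsup_measure_compl_le hmble hlimsup
  have hfreq : ∃ᶠ N in atTop,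
      ((((fun N => cesaroEmp shift3 xTri N) ∘ φ) N :
        Measure (ℕ → Fin 3)) {y | y 0 = q}) ≤ 3 / 13 := by
    refine hq.mono ?_
    intro N hN
    show ((cesaroEmp shift3 xTri (φ N) : Measure (ℕ → Fin 3)) {y | y 0 = q}) ≤ 3 / 13
    rw [cesaroEmp_cyl]
    have hcast : ((φ N : ℝ≥0∞) + 1) = ((φ N + 1 : ℕ) : ℝ≥0∞) := by push_cast; ring
    rw [hcast]
    exact div_le_313 (by omega) (hN ▸ hQ N)
  have hν313 : ν.toMeasure {y | y 0 = q} ≤ 3 / 13 :=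
    hliminf.trans (Filter.liminf_le_of_frequently_le' hfreq)
  have hlt : (3 / 13 : ℝ≥0∞) < 1 / 3 := by
    rw [ENNReal.div_lt_iff (Or.inl (by norm_num)) (Or.inl (by norm_num))]
    rw [show (1 / 3 : ℝ≥0∞) * 13 = 13 / 3 by
      rw [div_eq_mul_inv, div_eq_mul_inv]; ring]
    rw [ENNReal.lt_div_iff_mul_lt (Or.inl (by norm_num)) (Or.inl (by norm_num))]
    norm_num
  refine ⟨⟨q, hν313, hlt⟩, ?_⟩
  intro hall
  rw [hall q] at hν313
  exact absurd hν313 (not_le.mpr hlt)
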